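/- For every complex manifold X, the Hodge filtered complex bordism groups sit in a long exact sequence … → MU^{n−1}(X) ⊗ C → MU^n_D(p)(X) → MU^n(X) ⊕ H^n(X; Ω^{*≥p}(π_{2*}MU ⊗ C)) → MU^n(X) ⊗ C → …, using the isomorphism MU^n(X) ⊗ C ≅ ⊕_j H^{n+2j}(X; π_{2j}MU ⊗ C). -/

import Mathlib

/-!
STATEMENT 13: For every complex manifold `X`, the Hodge filtered complex bordism groups
sit in a long exact sequence
`… → MU^{n−1}(X) ⊗ ℂ → MU^n_D(p)(X) → MU^n(X) ⊕ H^n(X; Ω^{*≥p}(π_{2*}MU ⊗ ℂ))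
   → MU^n(X) ⊗ ℂ → …`,
using the isomorphism `MU^n(X) ⊗ ℂ ≅ ⊕_j H^{n+2j}(X; π_{2j}MU ⊗ ℂ)`.

The stable homotopy category of presheaves of symmetric spectra on `Man_ℂ` is
axiomatized as a pretriangulated category `S`; `SigX = Σ^∞₊X`, `MUo = MU`,
`FpOm = H(Ω^{*≥p}(π_{2*}MU ⊗ ℂ))`, `Om = H(Ω^*(π_{2*}MU ⊗ ℂ))`, and the homotopy
pullback square defining `MU_D(p)` is encoded by a distinguished triangle.  The
isomorphism `MU^n(X) ⊗ ℂ ≅ H^n(X; π_{2*}MU ⊗ ℂ) = (SigX ⟶ Om⟦n⟧)` is part of the data.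
-/

open CategoryTheory Limits Pretriangulated Category

theorem hodge_filtered_stmt_13
    -- the stable homotopy category of presheaves of symmetric spectra on Man_ℂ
    (S : Type 1) [Category S] [Preadditive S] [HasZeroObject S] [HasShift S ℤ]
    [∀ n : ℤ, (shiftFunctor S n).Additive] [Pretriangulated S] [HasBinaryBiproducts S]
    -- Σ^∞₊X; the Thom spectrum MU; the Eilenberg–MacLane spectra of the (filtered)
    -- holomorphic de Rham complexes with coefficients in π_{2*}MU ⊗ ℂ
    (SigX MUo FpOm Om : S)
    (τ : MUo ⟶ Om) (ι : FpOm ⟶ Om)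
    -- MU_D(p), the homotopy pullback, encoded as a distinguished triangle
    (MUD : S) (pr1 : MUD ⟶ MUo) (pr2 : MUD ⟶ FpOm)
    (hpullback : ∃ w : Om ⟶ MUD⟦(1 : ℤ)⟧,
      Triangle.mk (biprod.lift pr1 pr2) (biprod.desc τ (-ι)) w ∈ distTriang S)
    -- the isomorphism MU^n(X) ⊗ ℂ ≅ ⊕_j H^{n+2j}(X; π_{2j}MU ⊗ ℂ)
    (e : ∀ n : ℤ, TensorProduct ℤ ℂ (SigX ⟶ MUo⟦n⟧) ≃+ (SigX ⟶ Om⟦n⟧)) :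
    -- the long exact sequence of Hodge filtered complex bordism groups
    ∃ δ : ∀ n : ℤ, TensorProduct ℤ ℂ (SigX ⟶ MUo⟦n⟧) →+ (SigX ⟶ MUD⟦n + 1⟧),
      ∀ n : ℤ,
        -- exactness at MU^{n+1}_D(p)(X)
        Function.Exact (δ n)
          (fun ψ : SigX ⟶ MUD⟦n + 1⟧ =>
            (ψ ≫ (shiftFunctor S (n + 1)).map pr1,
             ψ ≫ (shiftFunctor S (n + 1)).map pr2)) ∧
        -- exactness at MU^n(X) ⊕ H^n(X; Ω^{*≥p}(π_{2*}MU ⊗ ℂ))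
        Function.Exact
          (fun ψ : SigX ⟶ MUD⟦n⟧ =>
            (ψ ≫ (shiftFunctor S n).map pr1, ψ ≫ (shiftFunctor S n).map pr2))
          (fun x : (SigX ⟶ MUo⟦n⟧) × (SigX ⟶ FpOm⟦n⟧) =>
            (e n).symm (x.1 ≫ (shiftFunctor S n).map τ - x.2 ≫ (shiftFunctor S n).map ι)) ∧
        -- exactness at MU^n(X) ⊗ ℂ
        Function.Exact
          (fun x : (SigX ⟶ MUo⟦n⟧) × (SigX ⟶ FpOm⟦n⟧) =>
            (e n).symm (x.1 ≫ (shiftFunctor S n).map τ - x.2 ≫ (shiftFunctor S n).map ι))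
          (δ n) := by
  obtain ⟨w, hT⟩ := hpullback
  -- composition with an isomorphism is zero iff the morphism is zero
  have cz : ∀ {A B B' : S} (i : B ⟶ B') [IsIso i] (u : A ⟶ B), u ≫ i = 0 ↔ u = 0 := by
    intro A B B' i _ u
    constructor
    · intro h
      have h' := h =≫ CategoryTheory.inv i
      simpa using h'
    · rintro rfl; simp
  have esymm0 : ∀ (n : ℤ) (z : SigX ⟶ Om⟦n⟧), (e n).symm z = 0 ↔ z = 0 := by
    intro n z
    constructor
    · intro h
      have := congrArg (e n) h
      simpa using this
    · rintro rfl; simp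
  -- shifted biproduct facts
  have F2 : ∀ (m : ℤ) (φ : SigX ⟶ (MUo ⊞ FpOm)⟦m⟧),
      (φ ≫ (shiftFunctor S m).map biprod.fst) ≫ (shiftFunctor S m).map biprod.inl
        + (φ ≫ (shiftFunctor S m).map biprod.snd) ≫ (shiftFunctor S m).map biprod.inr = φ := by
    intro m φ
    rw [assoc, assoc, ← CategoryTheory.Functor.map_comp, ← CategoryTheory.Functor.map_comp,
      ← Preadditive.comp_add, ← CategoryTheory.Functor.map_add, biprod.total,
      CategoryTheory.Functor.map_id, comp_id]
  have pairzero : ∀ (m : ℤ) (u : SigX ⟶ (MUo ⊞ FpOm)⟦m⟧),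
      (u ≫ (shiftFunctor S m).map biprod.fst = 0 ∧
        u ≫ (shiftFunctor S m).map biprod.snd = 0) → u = 0 := by
    rintro m u ⟨h1, h2⟩
    rw [← F2 m u, h1, h2, zero_comp, zero_comp, add_zero]
  have F1a : ∀ (m : ℤ) (x1 : SigX ⟶ MUo⟦m⟧) (x2 : SigX ⟶ FpOm⟦m⟧),
      (x1 ≫ (shiftFunctor S m).map biprod.inl + x2 ≫ (shiftFunctor S m).map biprod.inr) ≫
        (shiftFunctor S m).map biprod.fst = x1 := by
    intro m x1 x2
    rw [Preadditive.add_comp, assoc, assoc, ← CategoryTheory.Functor.map_comp,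
      ← CategoryTheory.Functor.map_comp, biprod.inl_fst, biprod.inr_fst,
      CategoryTheory.Functor.map_id, comp_id, CategoryTheory.Functor.map_zero, comp_zero, add_zero]
  have F1b : ∀ (m : ℤ) (x1 : SigX ⟶ MUo⟦m⟧) (x2 : SigX ⟶ FpOm⟦m⟧),
      (x1 ≫ (shiftFunctor S m).map biprod.inl + x2 ≫ (shiftFunctor S m).map biprod.inr) ≫
        (shiftFunctor S m).map biprod.snd = x2 := by
    intro m x1 x2
    rw [Preadditive.add_comp, assoc, assoc, ← CategoryTheory.Functor.map_comp,
      ← CategoryTheory.Functor.map_comp, biprod.inl_snd, biprod.inr_snd,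
      CategoryTheory.Functor.map_id, comp_id, CategoryTheory.Functor.map_zero, comp_zero, zero_add]
  have F3 : ∀ (m : ℤ) (x1 : SigX ⟶ MUo⟦m⟧) (x2 : SigX ⟶ FpOm⟦m⟧),
      (x1 ≫ (shiftFunctor S m).map biprod.inl + x2 ≫ (shiftFunctor S m).map biprod.inr) ≫
        (shiftFunctor S m).map (biprod.desc τ (-ι)) =
      x1 ≫ (shiftFunctor S m).map τ - x2 ≫ (shiftFunctor S m).map ι := by
    intro m x1 x2
    rw [Preadditive.add_comp, assoc, assoc, ← CategoryTheory.Functor.map_comp,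
      ← CategoryTheory.Functor.map_comp, biprod.inl_desc, biprod.inr_desc,
      CategoryTheory.Functor.map_neg, Preadditive.comp_neg, ← sub_eq_add_neg]
  -- the clean shifted distinguished triangles
  have hTc : ∀ n : ℤ, Triangle.mk
      ((shiftFunctor S n).map (biprod.lift pr1 pr2))
      ((shiftFunctor S n).map (biprod.desc τ (-ι)))
      (n.negOnePow • ((shiftFunctor S n).map w ≫ (shiftFunctorComm S 1 n).hom.app MUD))
      ∈ distTriang S := by
    intro n
    refine isomorphic_distinguished _
      (Triangle.shift_distinguished _ hT n) _ ?_
    refine Triangle.isoMk _ _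
      (⟨n.negOnePow • 𝟙 _, n.negOnePow • 𝟙 _, ?_, ?_⟩ : MUD⟦n⟧ ≅ MUD⟦n⟧)
      (Iso.refl _)
      (⟨n.negOnePow • 𝟙 _, n.negOnePow • 𝟙 _, ?_, ?_⟩ : Om⟦n⟧ ≅ Om⟦n⟧) ?_ ?_ ?_
    · simp [smul_smul]
    · simp [smul_smul]
    · simp [smul_smul]
    · simp [smul_smul]
    · show (shiftFunctor S n).map (biprod.lift pr1 pr2) ≫ 𝟙 _ =
        (n.negOnePow • 𝟙 _) ≫ ((n.negOnePow : ℤ) • (shiftFunctor S n).map (biprod.lift pr1 pr2))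
      simp only [Units.smul_def, Preadditive.zsmul_comp, Preadditive.comp_zsmul, smul_smul, comp_id, id_comp,
        ← Units.val_mul, Int.units_mul_self, Units.val_one, one_smul]
    · show (shiftFunctor S n).map (biprod.desc τ (-ι)) ≫ (n.negOnePow • 𝟙 _) =
        𝟙 _ ≫ (n.negOnePow • (shiftFunctor S n).map (biprod.desc τ (-ι)))
      simp only [Units.smul_def, Preadditive.zsmul_comp, Preadditive.comp_zsmul, comp_id, id_comp]
    · show (n.negOnePow • ((shiftFunctor S n).map w ≫ (shiftFunctorComm S 1 n).hom.app MUD)) ≫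
          (shiftFunctor S 1).map (n.negOnePow • 𝟙 _) =
        (n.negOnePow • 𝟙 _) ≫ (n.negOnePow • ((shiftFunctor S n).map w ≫ (shiftFunctorComm S 1 n).hom.app MUD))
      simp only [Units.smul_def, Functor.map_zsmul, Preadditive.zsmul_comp, Preadditive.comp_zsmul, smul_smul,
        CategoryTheory.Functor.map_id, comp_id, id_comp]
      exact congrArg _ (comp_id _)
  -- coyoneda exactness for distinguished triangles
  have L2 : ∀ (T' : Triangle S) (_ : T' ∈ distTriang S) (g : SigX ⟶ T'.obj₂),
      g ≫ T'.mor₂ = 0 ↔ ∃ f, f ≫ T'.mor₁ = g := by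
    intro T' hT' g
    constructor
    · intro hg
      obtain ⟨f, hf⟩ := Triangle.coyoneda_exact₂ T' hT' g hg
      exact ⟨f, hf.symm⟩
    · rintro ⟨f, rfl⟩
      rw [assoc, comp_distTriang_mor_zero₁₂ _ hT', comp_zero]
  have L3 : ∀ (T' : Triangle S) (_ : T' ∈ distTriang S) (g : SigX ⟶ T'.obj₃),
      g ≫ T'.mor₃ = 0 ↔ ∃ f, f ≫ T'.mor₂ = g := by
    intro T' hT' g
    constructor
    · intro hg
      obtain ⟨f, hf⟩ := Triangle.coyoneda_exact₃ T' hT' g hg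
      exact ⟨f, hf.symm⟩
    · rintro ⟨f, rfl⟩
      rw [assoc, comp_distTriang_mor_zero₂₃ _ hT', comp_zero]
  have L1 : ∀ (T' : Triangle S) (_ : T' ∈ distTriang S) (g : SigX ⟶ T'.obj₁⟦(1:ℤ)⟧),
      g ≫ T'.mor₁⟦(1:ℤ)⟧' = 0 ↔ ∃ f, f ≫ T'.mor₃ = g := by
    intro T' hT' g
    constructor
    · intro hg
      obtain ⟨f, hf⟩ := Triangle.coyoneda_exact₁ T' hT' g hg
      exact ⟨f, hf.symm⟩
    · rintro ⟨f, rfl⟩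
      rw [assoc, comp_distTriang_mor_zero₃₁ _ hT', comp_zero]
  refine ⟨fun n => AddMonoidHom.mk'
    (fun x => (e n) x ≫
      ((n.negOnePow • ((shiftFunctor S n).map w ≫ (shiftFunctorComm S 1 n).hom.app MUD)) ≫
        (shiftFunctorAdd' S n 1 (n + 1) rfl).inv.app MUD))
    (fun x y => by simp only [map_add, Preadditive.add_comp]), fun n => ?_⟩
  -- specialized exactness statements
  have L1' : ∀ (g : SigX ⟶ (MUD⟦n⟧)⟦(1:ℤ)⟧),
      g ≫ (shiftFunctor S 1).map ((shiftFunctor S n).map (biprod.lift pr1 pr2)) = 0 ↔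
      ∃ f : SigX ⟶ Om⟦n⟧, f ≫
        (n.negOnePow • ((shiftFunctor S n).map w ≫ (shiftFunctorComm S 1 n).hom.app MUD)) = g :=
    L1 _ (hTc n)
  have L2' : ∀ (g : SigX ⟶ (MUo ⊞ FpOm)⟦n⟧),
      g ≫ (shiftFunctor S n).map (biprod.desc τ (-ι)) = 0 ↔
      ∃ f : SigX ⟶ MUD⟦n⟧, f ≫ (shiftFunctor S n).map (biprod.lift pr1 pr2) = g :=
    L2 _ (hTc n)
  have L3' : ∀ (g : SigX ⟶ Om⟦n⟧),
      g ≫ (n.negOnePow • ((shiftFunctor S n).map w ≫ (shiftFunctorComm S 1 n).hom.app MUD)) = 0 ↔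
      ∃ f : SigX ⟶ (MUo ⊞ FpOm)⟦n⟧, f ≫ (shiftFunctor S n).map (biprod.desc τ (-ι)) = g :=
    L3 _ (hTc n)
  have z12 : (shiftFunctor S n).map (biprod.lift pr1 pr2) ≫
      (shiftFunctor S n).map (biprod.desc τ (-ι)) = 0 :=
    comp_distTriang_mor_zero₁₂ _ (hTc n)
  have z23 : (shiftFunctor S n).map (biprod.desc τ (-ι)) ≫
      (n.negOnePow • ((shiftFunctor S n).map w ≫ (shiftFunctorComm S 1 n).hom.app MUD)) = 0 :=
    comp_distTriang_mor_zero₂₃ _ (hTc n)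
  have z31 : (n.negOnePow • ((shiftFunctor S n).map w ≫ (shiftFunctorComm S 1 n).hom.app MUD)) ≫
      (shiftFunctor S 1).map ((shiftFunctor S n).map (biprod.lift pr1 pr2)) = 0 :=
    comp_distTriang_mor_zero₃₁ _ (hTc n)
  have hnat1 : (shiftFunctor S 1).map ((shiftFunctor S n).map (biprod.lift pr1 pr2)) ≫
      (shiftFunctorAdd' S n 1 (n + 1) rfl).inv.app (MUo ⊞ FpOm) =
      (shiftFunctorAdd' S n 1 (n + 1) rfl).inv.app MUD ≫
        (shiftFunctor S (n + 1)).map (biprod.lift pr1 pr2) :=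
    (shiftFunctorAdd' S n 1 (n + 1) rfl).inv.naturality _
  refine ⟨?_, ?_, ?_⟩
  · -- exactness at MUD⟦n+1⟧
    intro ψ
    simp only [AddMonoidHom.mk'_apply, Prod.mk_eq_zero, Set.mem_range]
    constructor
    · rintro ⟨h1, h2⟩
      have hlift : ψ ≫ (shiftFunctor S (n + 1)).map (biprod.lift pr1 pr2) = 0 := by
        refine pairzero (n + 1) _ ⟨?_, ?_⟩
        · rw [assoc, ← CategoryTheory.Functor.map_comp, biprod.lift_fst]; exact h1
        · rw [assoc, ← CategoryTheory.Functor.map_comp, biprod.lift_snd]; exact h2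
      have h0 : (ψ ≫ CategoryTheory.inv ((shiftFunctorAdd' S n 1 (n + 1) rfl).inv.app MUD)) ≫
          (shiftFunctor S 1).map ((shiftFunctor S n).map (biprod.lift pr1 pr2)) = 0 := by
        rw [← cz ((shiftFunctorAdd' S n 1 (n + 1) rfl).inv.app (MUo ⊞ FpOm)) _, assoc, hnat1,
          assoc, IsIso.inv_hom_id_assoc]
        exact hlift
      obtain ⟨f, hf⟩ := (L1' _).1 h0
      refine ⟨(e n).symm f, ?_⟩
      rw [AddEquiv.apply_symm_apply, ← assoc, hf, assoc, IsIso.inv_hom_id, comp_id]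
    · rintro ⟨x, rfl⟩
      have key : ((e n) x ≫
          (n.negOnePow • ((shiftFunctor S n).map w ≫ (shiftFunctorComm S 1 n).hom.app MUD)) ≫
            (shiftFunctorAdd' S n 1 (n + 1) rfl).inv.app MUD) ≫
          (shiftFunctor S (n + 1)).map (biprod.lift pr1 pr2) = 0 := by
        rw [assoc, assoc, ← hnat1,
          show (n.negOnePow • ((shiftFunctor S n).map w ≫ (shiftFunctorComm S 1 n).hom.app MUD)) ≫
            (shiftFunctor S 1).map ((shiftFunctor S n).map (biprod.lift pr1 pr2)) ≫
              (shiftFunctorAdd' S n 1 (n + 1) rfl).inv.app (MUo ⊞ FpOm) = 0 from by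
              rw [← assoc, z31, zero_comp], comp_zero]
      constructor
      · rw [← biprod.lift_fst pr1 pr2, CategoryTheory.Functor.map_comp, ← assoc, key, zero_comp]
      · rw [← biprod.lift_snd pr1 pr2, CategoryTheory.Functor.map_comp, ← assoc, key, zero_comp]
  · -- exactness at MU ⊕ F^p
    intro x
    simp only [Set.mem_range]
    constructor
    · intro h
      rw [esymm0, ← F3 n x.1 x.2] at h
      obtain ⟨f, hf⟩ := (L2' _).1 h
      refine ⟨f, ?_⟩
      refine Prod.ext ?_ ?_
      · show f ≫ (shiftFunctor S n).map pr1 = x.1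
        rw [← biprod.lift_fst pr1 pr2, CategoryTheory.Functor.map_comp, ← assoc, hf, F1a]
      · show f ≫ (shiftFunctor S n).map pr2 = x.2
        rw [← biprod.lift_snd pr1 pr2, CategoryTheory.Functor.map_comp, ← assoc, hf, F1b]
    · rintro ⟨ψ, rfl⟩
      dsimp only
      rw [esymm0, ← F3 n _ _,
        show (ψ ≫ (shiftFunctor S n).map pr1) ≫ (shiftFunctor S n).map biprod.inl +
            (ψ ≫ (shiftFunctor S n).map pr2) ≫ (shiftFunctor S n).map biprod.inr =
          ψ ≫ (shiftFunctor S n).map (biprod.lift pr1 pr2) from by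
          rw [show ψ ≫ (shiftFunctor S n).map pr1 =
              (ψ ≫ (shiftFunctor S n).map (biprod.lift pr1 pr2)) ≫
                (shiftFunctor S n).map biprod.fst from by
              rw [assoc, ← CategoryTheory.Functor.map_comp, biprod.lift_fst],
            show ψ ≫ (shiftFunctor S n).map pr2 =
              (ψ ≫ (shiftFunctor S n).map (biprod.lift pr1 pr2)) ≫
                (shiftFunctor S n).map biprod.snd from by
              rw [assoc, ← CategoryTheory.Functor.map_comp, biprod.lift_snd], F2],
        assoc, z12, comp_zero]
  · -- exactness at MU ⊗ ℂ
    intro y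
    simp only [AddMonoidHom.mk'_apply, Set.mem_range]
    constructor
    · intro h
      rw [← assoc, cz] at h
      obtain ⟨f, hf⟩ := (L3' _).1 h
      refine ⟨(f ≫ (shiftFunctor S n).map biprod.fst, f ≫ (shiftFunctor S n).map biprod.snd), ?_⟩
      rw [← F3, F2, hf, AddEquiv.symm_apply_apply]
    · rintro ⟨x, hx⟩
      have hy : (e n) y = (x.1 ≫ (shiftFunctor S n).map biprod.inl +
          x.2 ≫ (shiftFunctor S n).map biprod.inr) ≫
            (shiftFunctor S n).map (biprod.desc τ (-ι)) := by
        rw [← hx, AddEquiv.apply_symm_apply, F3]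
      rw [hy, assoc,
        show (shiftFunctor S n).map (biprod.desc τ (-ι)) ≫
          (n.negOnePow • ((shiftFunctor S n).map w ≫ (shiftFunctorComm S 1 n).hom.app MUD)) ≫
            (shiftFunctorAdd' S n 1 (n + 1) rfl).inv.app MUD = 0 from by
          rw [← assoc, z23, zero_comp], comp_zero]
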